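/- Let H ∈ ℝ₊^{r×n} satisfy the NC-SSC. Then the supremum of ‖x‖₂ over {x : eᵀx = 1, Hᵀx ≥ 0} equals 1 if and only if the supremum of ‖x‖₂ over {x : eᵀx = 1, Hᵀx ≥ 0, −1 ≤ x_i ≤ 1 for all i} equals 1. -/

import Mathlib

noncomputable def euclidNorm {r : ℕ} (x : Fin r → ℝ) : ℝ := Real.sqrt (∑ i, (x i) ^ 2)

/-- Under NC-SSC, every feasible `x` has all coordinates at most 1. -/
lemma coord_le_one {r n : ℕ} (H : Matrix (Fin r) (Fin n) ℝ)
    (hnc : ∀ i : Fin r, ∃ y : Fin n → ℝ, (∀ j, 0 ≤ y j) ∧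
      H.mulVec y = fun j => (1 : ℝ) - (if j = i then 1 else 0))
    (x : Fin r → ℝ) (hsum : (∑ i, x i) = 1)
    (hpos : ∀ j, 0 ≤ ∑ i, H i j * x i) (i : Fin r) : x i ≤ 1 := by
  obtain ⟨y, hy, hHy⟩ := hnc i
  have h2 : (0:ℝ) ≤ ∑ k, x k * H.mulVec y k := by
    have : ∑ k, x k * H.mulVec y k = ∑ j, y j * ∑ k, H k j * x k := by
      simp only [Matrix.mulVec, dotProduct, Finset.mul_sum]
      rw [Finset.sum_comm]
      apply Finset.sum_congr rfl
      intro j _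
      apply Finset.sum_congr rfl
      intro k _
      ring
    rw [this]
    apply Finset.sum_nonneg
    intro j _
    exact mul_nonneg (hy j) (hpos j)
  have h1 : ∑ k, x k * H.mulVec y k = 1 - x i := by
    rw [hHy]
    simp only [mul_sub, mul_one, Finset.sum_sub_distrib, hsum, mul_ite, mul_zero]
    rw [Finset.sum_ite_eq' Finset.univ i x]
    simp
  linarith [h1 ▸ h2]

/-- Lemma 4.2: under the NC-SSC, the supremum of `‖x‖₂` over
`{x : eᵀx = 1, Hᵀx ≥ 0}` equals 1 iff the supremum of `‖x‖₂` over the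
box-constrained set `{x : eᵀx = 1, Hᵀx ≥ 0, -1 ≤ xᵢ ≤ 1}` equals 1. -/
theorem sup_eq_one_iff_box {r n : ℕ} (hr : 2 ≤ r) (H : Matrix (Fin r) (Fin n) ℝ)
    (hH : ∀ i j, 0 ≤ H i j)
    (hnc : ∀ i : Fin r, ∃ y : Fin n → ℝ, (∀ j, 0 ≤ y j) ∧
      H.mulVec y = fun j => (1 : ℝ) - (if j = i then 1 else 0)) :
    sSup {t : ℝ | ∃ x : Fin r → ℝ,
        (∑ i, x i) = 1 ∧ (∀ j, 0 ≤ ∑ i, H i j * x i) ∧ euclidNorm x = t} = 1 ↔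
    sSup {t : ℝ | ∃ x : Fin r → ℝ,
        (∑ i, x i) = 1 ∧ (∀ j, 0 ≤ ∑ i, H i j * x i) ∧
        (∀ i, -1 ≤ x i ∧ x i ≤ 1) ∧ euclidNorm x = t} = 1 := by
  set A := {t : ℝ | ∃ x : Fin r → ℝ,
      (∑ i, x i) = 1 ∧ (∀ j, 0 ≤ ∑ i, H i j * x i) ∧ euclidNorm x = t} with hA
  set B := {t : ℝ | ∃ x : Fin r → ℝ,
      (∑ i, x i) = 1 ∧ (∀ j, 0 ≤ ∑ i, H i j * x i) ∧
      (∀ i, -1 ≤ x i ∧ x i ≤ 1) ∧ euclidNorm x = t} with hB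
  have hBA : B ⊆ A := by
    rintro t ⟨x, h1, h2, _, h4⟩
    exact ⟨x, h1, h2, h4⟩
  -- the unit vector e₀
  have hr0 : 0 < r := by omega
  set i0 : Fin r := ⟨0, hr0⟩ with hi0
  set e0 : Fin r → ℝ := fun k => if k = i0 then 1 else 0 with he0
  have he0sum : (∑ i, e0 i) = 1 := by simp [he0]
  have he0pos : ∀ j, 0 ≤ ∑ i, H i j * e0 i := by
    intro j
    simp only [he0, mul_ite, mul_one, mul_zero]
    rw [Finset.sum_ite_eq' Finset.univ i0]
    simpa using hH i0 j
  have he0norm : euclidNorm e0 = 1 := by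
    unfold euclidNorm
    have h : ∀ k, (e0 k) ^ 2 = e0 k := by
      intro k
      simp only [he0]
      split <;> norm_num
    rw [Finset.sum_congr rfl fun k _ => h k, he0sum, Real.sqrt_one]
  have h1A : (1:ℝ) ∈ A := ⟨e0, he0sum, he0pos, he0norm⟩
  have h1B : (1:ℝ) ∈ B := ⟨e0, he0sum, he0pos,
    fun i => by constructor <;> simp [he0] <;> split <;> norm_num, he0norm⟩
  constructor
  · intro hSA
    have hbddA : BddAbove A := by
      by_contra hb
      rw [Real.sSup_of_not_bddAbove hb] at hSA
      norm_num at hSA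
    have hbddB : BddAbove B := hbddA.mono hBA
    have hle : sSup B ≤ sSup A := csSup_le_csSup hbddA ⟨1, h1B⟩ hBA
    have hge : (1:ℝ) ≤ sSup B := le_csSup hbddB h1B
    rw [hSA] at hle
    linarith
  · intro hSB
    have hbddB : BddAbove B := by
      by_contra hb
      rw [Real.sSup_of_not_bddAbove hb] at hSB
      norm_num at hSB
    have hBle1 : ∀ t ∈ B, t ≤ 1 := by
      intro t ht
      have := le_csSup hbddB ht
      rw [hSB] at this
      exact this
    -- every element of A is ≤ 1
    have hAle1 : ∀ t ∈ A, t ≤ 1 := by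
      rintro t ⟨x, hsum, hpos, hnorm⟩
      rw [← hnorm]
      unfold euclidNorm
      rw [Real.sqrt_le_one]
      by_contra hS
      push_neg at hS
      have hxle : ∀ i, x i ≤ 1 := coord_le_one H hnc x hsum hpos
      by_cases hlo : ∀ i, -1 ≤ x i
      · have : euclidNorm x ∈ B := ⟨x, hsum, hpos, fun i => ⟨hlo i, hxle i⟩, rfl⟩
        have h := hBle1 _ this
        unfold euclidNorm at h
        rw [Real.sqrt_le_one] at h
        linarith
      · push_neg at hlo
        obtain ⟨k0, hk0⟩ := hlo
        -- minimizer
        obtain ⟨im, _, him⟩ := Finset.exists_min_image Finset.univ x ⟨i0, Finset.mem_univ i0⟩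
        have him' : ∀ k, x im ≤ x k := fun k => him k (Finset.mem_univ k)
        have hm : x im < -1 := lt_of_le_of_lt (him' k0) hk0
        have hrpos : (0:ℝ) < (r:ℝ) := by positivity
        have hrne : (r:ℝ) ≠ 0 := ne_of_gt hrpos
        set m := x im with hmdef
        have hden : (0:ℝ) < 1/(r:ℝ) - m := by
          have : (0:ℝ) < 1/(r:ℝ) := by positivity
          linarith
        set lam : ℝ := (1/(r:ℝ) + 1) / (1/(r:ℝ) - m) with hlam
        have hlam0 : 0 ≤ lam := by
          apply div_nonneg _ (le_of_lt hden)
          positivity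
        have hlam1 : lam ≤ 1 := by
          rw [hlam, div_le_one hden]
          linarith
        have hlameq : lam * (1/(r:ℝ) - m) = 1/(r:ℝ) + 1 := by
          rw [hlam, div_mul_cancel₀]
          exact ne_of_gt hden
        set z : Fin r → ℝ := fun k => lam * x k + (1 - lam) / (r:ℝ) with hz
        have hzsum : (∑ i, z i) = 1 := by
          simp only [hz, Finset.sum_add_distrib, ← Finset.mul_sum, hsum,
            Finset.sum_const, Finset.card_univ, Fintype.card_fin, nsmul_eq_mul]
          field_simp
          ring
        have hzpos : ∀ j, 0 ≤ ∑ i, H i j * z i := by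
          intro j
          have : ∑ i, H i j * z i
              = lam * (∑ i, H i j * x i) + (1 - lam)/(r:ℝ) * (∑ i, H i j) := by
            simp only [hz, Finset.mul_sum]
            rw [← Finset.sum_add_distrib]
            apply Finset.sum_congr rfl
            intro k _
            ring
          rw [this]
          have h1 : 0 ≤ lam * (∑ i, H i j * x i) := mul_nonneg hlam0 (hpos j)
          have h2 : 0 ≤ (1 - lam)/(r:ℝ) * (∑ i, H i j) := by
            apply mul_nonneg
            · apply div_nonneg (by linarith) (le_of_lt hrpos)
            · exact Finset.sum_nonneg fun i _ => hH i j
          linarith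
        have hzim : z im = -1 := by
          simp only [hz]
          have : lam * m = lam * (1/(r:ℝ)) - (1/(r:ℝ) + 1) := by
            have := hlameq
            ring_nf at this ⊢
            linarith
          rw [← hmdef]
          rw [this]
          field_simp
          ring
        have hzbox : ∀ k, -1 ≤ z k ∧ z k ≤ 1 := by
          intro k
          constructor
          · have h1 : lam * m ≤ lam * x k := mul_le_mul_of_nonneg_left (him' k) hlam0
            have h2 : lam * m = lam * (1/(r:ℝ)) - (1/(r:ℝ) + 1) := by
              have := hlameq; ring_nf at this ⊢; linarith
            simp only [hz]
            have h3 : lam * (1/(r:ℝ)) + (1 - lam)/(r:ℝ) = 1/(r:ℝ) := by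
              field_simp
              ring
            nlinarith [h1, h2, h3]
          · simp only [hz]
            have h1 : lam * x k ≤ lam * 1 := mul_le_mul_of_nonneg_left (hxle k) hlam0
            have hr1 : (1:ℝ) ≤ (r:ℝ) := by exact_mod_cast hr0
            have h2 : (1 - lam)/(r:ℝ) ≤ (1 - lam) := div_le_self (by linarith) hr1
            linarith
        -- sum of squares of z > 1
        have hzsq : 1 < ∑ i, (z i) ^ 2 := by
          have hsplit : ∑ i, (z i) ^ 2
              = (z im) ^ 2 + ∑ i ∈ Finset.univ.erase im, (z i) ^ 2 :=
            (Finset.add_sum_erase Finset.univ (fun i => (z i) ^ 2) (Finset.mem_univ im)).symm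
          have hrest_sum : ∑ i ∈ Finset.univ.erase im, z i = 2 := by
            have := Finset.add_sum_erase Finset.univ z (Finset.mem_univ im)
            rw [hzsum] at this
            rw [hzim] at this
            linarith
          have hne : ∑ i ∈ Finset.univ.erase im, z i ≠ 0 := by
            rw [hrest_sum]; norm_num
          obtain ⟨a, ha, hane⟩ := Finset.exists_ne_zero_of_sum_ne_zero hne
          have hpos' : (0:ℝ) < (z a) ^ 2 := by positivity
          have hle : (z a) ^ 2 ≤ ∑ i ∈ Finset.univ.erase im, (z i) ^ 2 :=
            Finset.single_le_sum (fun i _ => sq_nonneg (z i)) ha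
          rw [hsplit, hzim]
          nlinarith
        have : euclidNorm z ∈ B := ⟨z, hzsum, hzpos, hzbox, rfl⟩
        have h := hBle1 _ this
        unfold euclidNorm at h
        rw [Real.sqrt_le_one] at h
        linarith
    have hbddA : BddAbove A := ⟨1, fun t ht => hAle1 t ht⟩
    exact le_antisymm (csSup_le ⟨1, h1A⟩ hAle1) (le_csSup hbddA h1A)
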